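/- The map φ is injective on the set P of join-irreducible elements of Γ(X;γ), and its image is a filter of ℕ × ℕ equipped with the order (p,q) ≤ (p',q') iff p ≥ p' and q ≥ q' (i.e., if (p,q) is in the image and p' ≤ p, q' ≤ q, then (p',q') is in the image). Hence P is order-isomorphic to a finite filter of this poset. -/
import Mathlib


def IsTup (n m : ℕ) (c : Fin m → ℕ) : Prop :=
  StrictMono c ∧ ∀ i, 1 ≤ c i ∧ c i ≤ n

def Gamma (n m : ℕ) : Set (Fin m → ℕ) := {c | IsTup n m c}

def GammaF (n m : ℕ) (b : Fin m → ℕ) : Set (Fin m → ℕ) :=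
  {c | IsTup n m c ∧ b ≤ c}

/-- `prev c i` is `c (i-1)`, with the convention `c 0 = 0` (1-based indexing). -/
def prev {m : ℕ} (c : Fin m → ℕ) (i : Fin m) : ℕ :=
  if _ : i.1 = 0 then 0 else c ⟨i.1 - 1, Nat.lt_of_le_of_lt (Nat.sub_le _ _) i.2⟩

/-- the condition `c i > b i` and `c i > c (i-1) + 1`. -/
def Good {m : ℕ} (b c : Fin m → ℕ) (i : Fin m) : Prop :=
  b i < c i ∧ prev c i + 1 < c i

/-- `c` is join-irreducible in `Γ(X;γ)`: it covers exactly one element. -/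
def JoinIrr (n m : ℕ) (b : Fin m → ℕ) (c : ↥(GammaF n m b)) : Prop :=
  ∃! y : ↥(GammaF n m b), y ⋖ c

/-- the poset of join-irreducible elements of `Γ(X;γ)`. -/
def JP (n m : ℕ) (b : Fin m → ℕ) : Set ↥(GammaF n m b) := {c | JoinIrr n m b c}

/-- the map φ, computed at index `i` (0-based; 1-based index is `i+1`). -/
def phi (n m : ℕ) (c : Fin m → ℕ) (i : Fin m) : ℕ × ℕ :=
  (n - c i - (m - 1 - i.1), i.1)

/-- the image of φ on the join-irreducible elements. -/
def PhiIm (n m : ℕ) (b : Fin m → ℕ) : Set (ℕ × ℕ) :=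
  {pq | ∃ c : ↥(GammaF n m b), ∃ i : Fin m,
    JoinIrr n m b c ∧ Good b (c : Fin m → ℕ) i ∧ phi n m (c : Fin m → ℕ) i = pq}

namespace Stmt5Aux

variable {n m : ℕ}

/-- a strictly monotone tuple grows at least linearly. -/
lemma smono_le {c : Fin m → ℕ} (hc : StrictMono c) :
    ∀ (lv : ℕ) (hl : lv < m) (k : Fin m), k.1 ≤ lv → c k + (lv - k.1) ≤ c ⟨lv, hl⟩ := by
  intro lv
  induction lv with
  | zero =>
    intro hl k hk
    have : k = ⟨0, hl⟩ := Fin.ext (Nat.le_zero.mp hk)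
    simp [this]
  | succ lv ih =>
    intro hl k hk
    rcases Nat.eq_or_lt_of_le hk with h | h
    · have : k = ⟨lv + 1, hl⟩ := Fin.ext h
      simp [this]
    · have hlv : lv < m := by omega
      have h1 := ih hlv k (by omega)
      have h2 : c ⟨lv, hlv⟩ < c ⟨lv + 1, hl⟩ := hc (by simp [Fin.lt_def])
      omega

/-- the key upper bound: `c i + (m - 1 - i) ≤ n`. -/
lemma bound {c : Fin m → ℕ} (hc : c ∈ GammaF n m c → True) : True := trivial

lemma tup_bound {c : Fin m → ℕ} (hc : IsTup n m c) (i : Fin m) :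
    c i + (m - 1 - i.1) ≤ n := by
  have hm : 0 < m := i.pos
  have h1 := smono_le hc.1 (m - 1) (by omega) i (by omega)
  have h2 := (hc.2 ⟨m - 1, by omega⟩).2
  omega

lemma prev_lt {c : Fin m → ℕ} (hc : StrictMono c) (h1 : ∀ i, 1 ≤ c i) (i : Fin m) :
    prev c i < c i := by
  unfold prev
  split
  · exact h1 i
  · exact hc (by simp [Fin.lt_def]; omega)

lemma prev_eq {c : Fin m → ℕ} {i : Fin m} (h : i.1 ≠ 0) :
    prev c i = c ⟨i.1 - 1, by omega⟩ := dif_neg h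

lemma prev_eq_zero {c : Fin m → ℕ} {i : Fin m} (h : i.1 = 0) : prev c i = 0 := dif_pos h

/-- decrement of `c` at `i`. -/
def dec (c : Fin m → ℕ) (i : Fin m) : Fin m → ℕ := fun k => if k = i then c i - 1 else c k

lemma dec_mem {b c : Fin m → ℕ} (hc : c ∈ GammaF n m b) {i : Fin m}
    (hg : Good b c i) : dec c i ∈ GammaF n m b := by
  obtain ⟨⟨hsm, hbd⟩, hbc⟩ := hc
  obtain ⟨hg1, hg2⟩ := hg
  have hprev := prev_lt hsm (fun j => (hbd j).1) i
  refine ⟨⟨?_, ?_⟩, ?_⟩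
  · intro k l hkl
    simp only [dec]
    have hkl' : c k < c l := hsm hkl
    rcases eq_or_ne k i with rfl | hki
    · rw [if_pos rfl, if_neg (by intro h; subst h; exact lt_irrefl _ hkl)]
      omega
    · rw [if_neg hki]
      rcases eq_or_ne l i with rfl | hli
      · rw [if_pos rfl]
        -- c k < c l - 1 since c k ≤ prev c l and prev c l + 1 < c l
        have hl0 : l.1 ≠ 0 := by
          intro h0
          have : k.1 < l.1 := hkl
          omega
        rw [prev_eq hl0] at hg2
        have : c k ≤ c ⟨l.1 - 1, by omega⟩ := by
          rcases eq_or_lt_of_le (show k.1 ≤ l.1 - 1 by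
            have : k.1 < l.1 := hkl; omega) with h | h
          · exact le_of_eq (congrArg c (Fin.ext h))
          · exact le_of_lt (hsm (by simpa [Fin.lt_def] using h))
        omega
      · rw [if_neg hli]; exact hkl'
  · intro k
    simp only [dec]
    rcases eq_or_ne k i with rfl | hki
    · rw [if_pos rfl]
      constructor
      · omega
      · have := (hbd k).2; omega
    · rw [if_neg hki]; exact hbd k
  · intro k
    simp only [dec]
    rcases eq_or_ne k i with rfl | hki
    · rw [if_pos rfl]
      have hb3 : b k ≤ c k := hbc k
      omega
    · rw [if_neg hki]; exact hbc k

lemma dec_lt {b c : Fin m → ℕ} (hc : c ∈ GammaF n m b) {i : Fin m}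
    (hg : Good b c i) : dec c i < c := by
  have h1 := (hc.1.2 i).1
  constructor
  · intro k
    show dec c i k ≤ c k
    simp only [dec]
    rcases eq_or_ne k i with rfl | hki
    · rw [if_pos rfl]; omega
    · rw [if_neg hki]
  · intro hle
    have h3 : c i ≤ dec c i i := hle i
    simp [dec] at h3
    omega

/-- the decrement at a good index is a cover. -/
lemma dec_covby {b : Fin m → ℕ} (c : ↥(GammaF n m b)) {i : Fin m}
    (hg : Good b (c : Fin m → ℕ) i) :
    (⟨dec (c : Fin m → ℕ) i, dec_mem c.2 hg⟩ : ↥(GammaF n m b)) ⋖ c := by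
  constructor
  · exact Subtype.mk_lt_mk.mpr (dec_lt c.2 hg)
  · intro z hz1 hz2
    have hz1' : dec (c : Fin m → ℕ) i < (z : Fin m → ℕ) := hz1
    have hz2' : (z : Fin m → ℕ) < (c : Fin m → ℕ) := hz2
    have hle1 : dec (c : Fin m → ℕ) i ≤ (z : Fin m → ℕ) := le_of_lt hz1'
    have hle2 : (z : Fin m → ℕ) ≤ (c : Fin m → ℕ) := le_of_lt hz2'
    have hz1ne : dec (c : Fin m → ℕ) i ≠ (z : Fin m → ℕ) := ne_of_lt hz1'
    have hz2ne : (z : Fin m → ℕ) ≠ (c : Fin m → ℕ) := ne_of_lt hz2'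
    -- z agrees with c off i, and z i ∈ {c i - 1, c i}
    have hoff : ∀ k, k ≠ i → (z : Fin m → ℕ) k = (c : Fin m → ℕ) k := by
      intro k hk
      have h1 : dec (c : Fin m → ℕ) i k ≤ (z : Fin m → ℕ) k := hle1 k
      have h2 : (z : Fin m → ℕ) k ≤ (c : Fin m → ℕ) k := hle2 k
      simp only [dec] at h1
      rw [if_neg hk] at h1
      omega
    have hi1 : dec (c : Fin m → ℕ) i i ≤ (z : Fin m → ℕ) i := hle1 i
    have hi2 : (z : Fin m → ℕ) i ≤ (c : Fin m → ℕ) i := hle2 i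
    simp [dec] at hi1
    rcases eq_or_lt_of_le hi2 with h | h
    · apply hz2ne
      funext k
      rcases eq_or_ne k i with rfl | hk
      · exact h
      · exact hoff k hk
    · apply hz1ne
      funext k
      rcases eq_or_ne k i with rfl | hk
      · show dec (c : Fin m → ℕ) k k = (z : Fin m → ℕ) k
        simp only [dec, if_pos]
        omega
      · show dec (c : Fin m → ℕ) i k = (z : Fin m → ℕ) k
        simp only [dec]; rw [if_neg hk]; exact (hoff k hk).symm

/-- every cover is a decrement at a good index. -/
lemma covby_dec {b : Fin m → ℕ} {c y : ↥(GammaF n m b)} (h : y ⋖ c) :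
    ∃ i : Fin m, Good b (c : Fin m → ℕ) i ∧ (y : Fin m → ℕ) = dec (c : Fin m → ℕ) i := by
  classical
  have hlt : (y : Fin m → ℕ) < (c : Fin m → ℕ) := h.1
  have hle : (y : Fin m → ℕ) ≤ (c : Fin m → ℕ) := le_of_lt hlt
  have hne : (y : Fin m → ℕ) ≠ (c : Fin m → ℕ) := ne_of_lt hlt
  have hex : ∃ k : Fin m, (y : Fin m → ℕ) k < (c : Fin m → ℕ) k := by
    by_contra hcon
    push_neg at hcon
    apply hne
    funext k
    have h1 : (y : Fin m → ℕ) k ≤ (c : Fin m → ℕ) k := hle k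
    have h2 : (c : Fin m → ℕ) k ≤ (y : Fin m → ℕ) k := hcon k
    omega
  obtain ⟨j, hjS, hjmin⟩ : ∃ j ∈ Finset.univ.filter
      (fun k => (y : Fin m → ℕ) k < (c : Fin m → ℕ) k),
      ∀ k ∈ Finset.univ.filter (fun k => (y : Fin m → ℕ) k < (c : Fin m → ℕ) k), j ≤ k := by
    obtain ⟨k, hk⟩ := hex
    have hne' : (Finset.univ.filter
        (fun k => (y : Fin m → ℕ) k < (c : Fin m → ℕ) k)).Nonempty :=
      ⟨k, by simp [hk]⟩
    exact ⟨_, Finset.min'_mem _ hne', fun k hk => Finset.min'_le _ k hk⟩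
  have hyj : (y : Fin m → ℕ) j < (c : Fin m → ℕ) j := by
    simpa using hjS
  have hminc : ∀ k : Fin m, k < j → (y : Fin m → ℕ) k = (c : Fin m → ℕ) k := by
    intro k hk
    have h1 : (y : Fin m → ℕ) k ≤ (c : Fin m → ℕ) k := hle k
    by_contra hne'
    have hkS : k ∈ Finset.univ.filter
        (fun k => (y : Fin m → ℕ) k < (c : Fin m → ℕ) k) := by
      simp only [Finset.mem_filter, Finset.mem_univ, true_and]
      omega
    exact absurd hk (not_lt.mpr (hjmin k hkS))
  have hyb : b ≤ (y : Fin m → ℕ) := y.2.2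
  have hgood : Good b (c : Fin m → ℕ) j := by
    constructor
    · have hbyj : b j ≤ (y : Fin m → ℕ) j := hyb j
      omega
    · rcases Nat.eq_zero_or_pos j.1 with h0 | h0
      · rw [prev_eq_zero h0]
        have h1 : 1 ≤ (y : Fin m → ℕ) j := (y.2.1.2 j).1
        omega
      · rw [prev_eq (show j.1 ≠ 0 by omega)]
        have hltj : (⟨j.1 - 1, by omega⟩ : Fin m) < j := by
          simp [Fin.lt_def]; omega
        have heqp : (y : Fin m → ℕ) ⟨j.1 - 1, by omega⟩ = (c : Fin m → ℕ) ⟨j.1 - 1, by omega⟩ :=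
          hminc _ hltj
        have hmono : (y : Fin m → ℕ) ⟨j.1 - 1, by omega⟩ < (y : Fin m → ℕ) j :=
          y.2.1.1 hltj
        omega
  refine ⟨j, hgood, ?_⟩
  have hdm := dec_mem c.2 hgood
  have hydec : (y : Fin m → ℕ) ≤ dec (c : Fin m → ℕ) j := by
    intro k
    show (y : Fin m → ℕ) k ≤ dec (c : Fin m → ℕ) j k
    have h1 : (y : Fin m → ℕ) k ≤ (c : Fin m → ℕ) k := hle k
    simp only [dec]
    rcases eq_or_ne k j with rfl | hk
    · rw [if_pos rfl]; omega
    · rw [if_neg hk]; exact h1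
  have hdlt : (⟨dec (c : Fin m → ℕ) j, hdm⟩ : ↥(GammaF n m b)) < c :=
    Subtype.mk_lt_mk.mpr (dec_lt c.2 hgood)
  have hyled : y ≤ (⟨dec (c : Fin m → ℕ) j, hdm⟩ : ↥(GammaF n m b)) := hydec
  rcases eq_or_lt_of_le hyled with heq | hlt'
  · rw [heq]
  · exact absurd hdlt (h.2 hlt')

/-- characterization: join-irreducible iff exactly one good index. -/
lemma joinIrr_iff_unique_good {b : Fin m → ℕ} (c : ↥(GammaF n m b)) :
    JoinIrr n m b c ↔ ∃! i : Fin m, Good b (c : Fin m → ℕ) i := by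
  constructor
  · rintro ⟨y, hy, huniq⟩
    obtain ⟨i, hi, hydec⟩ := covby_dec hy
    refine ⟨i, hi, ?_⟩
    intro j hj
    have h1 := huniq _ (dec_covby c hj)
    have h2 : dec (c : Fin m → ℕ) j = (y : Fin m → ℕ) := congrArg Subtype.val h1
    rw [hydec] at h2
    by_contra hne
    have hji := congrFun h2 j
    unfold dec at hji
    rw [if_pos rfl, if_neg hne] at hji
    have := (c.2.1.2 j).1
    omega
  · rintro ⟨i, hi, huniq⟩
    refine ⟨⟨dec (c : Fin m → ℕ) i, dec_mem c.2 hi⟩, dec_covby c hi, ?_⟩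
    intro y hy
    obtain ⟨j, hj, hydec⟩ := covby_dec hy
    have := huniq j hj
    subst this
    exact Subtype.ext hydec

/-- the canonical join-irreducible with good index `i` and value `v`. -/
def ji (b : Fin m → ℕ) (i : Fin m) (v : ℕ) : Fin m → ℕ :=
  fun k => if k.1 < i.1 then b k else max (b k) (v + (k.1 - i.1))

lemma ji_apply_self {b : Fin m → ℕ} {i : Fin m} {v : ℕ} (hv : b i < v) :
    ji b i v i = v := by
  unfold ji
  rw [if_neg (lt_irrefl _)]
  omega

lemma ji_apply_lt {b : Fin m → ℕ} {i k : Fin m} {v : ℕ} (h : k.1 < i.1) :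
    ji b i v k = b k := if_pos h

lemma ji_apply_ge {b : Fin m → ℕ} {i k : Fin m} {v : ℕ} (h : ¬ k.1 < i.1) :
    ji b i v k = max (b k) (v + (k.1 - i.1)) := if_neg h

set_option maxHeartbeats 1000000 in
/-- a join-irreducible element equals the canonical one. -/
lemma eq_ji {b : Fin m → ℕ} (c : ↥(GammaF n m b)) {i : Fin m}
    (hb : b ∈ Gamma n m)
    (hgood : Good b (c : Fin m → ℕ) i)
    (huniq : ∀ j : Fin m, Good b (c : Fin m → ℕ) j → j = i) :
    (c : Fin m → ℕ) = ji b i ((c : Fin m → ℕ) i) := by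
  set v := (c : Fin m → ℕ) i with hv
  have hsm := c.2.1.1
  have hb1 : ∀ k, 1 ≤ (c : Fin m → ℕ) k := fun k => (c.2.1.2 k).1
  have hbc : b ≤ (c : Fin m → ℕ) := c.2.2
  have hstep : ∀ k : Fin m, k ≠ i →
      (c : Fin m → ℕ) k ≤ b k ∨ (c : Fin m → ℕ) k ≤ prev (c : Fin m → ℕ) k + 1 := by
    intro k hk
    have hng : ¬ Good b (c : Fin m → ℕ) k := fun hg => hk (huniq k hg)
    rcases not_and_or.mp hng with h | h
    · exact Or.inl (not_lt.mp h)
    · exact Or.inr (not_lt.mp h)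
  have key : ∀ kv : ℕ, ∀ hk : kv < m, (c : Fin m → ℕ) ⟨kv, hk⟩ = ji b i v ⟨kv, hk⟩ := by
    intro kv
    induction kv using Nat.strong_induction_on with
    | _ kv ih =>
      intro hk
      have hb2 : b ⟨kv, hk⟩ ≤ (c : Fin m → ℕ) ⟨kv, hk⟩ := hbc ⟨kv, hk⟩
      rcases lt_trichotomy kv i.1 with hki | hki | hki
      · -- below i : show c k = b k
        rw [ji_apply_lt hki]
        have hne : (⟨kv, hk⟩ : Fin m) ≠ i := by
          intro hh; rw [Fin.ext_iff] at hh; simp at hh; omega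
        have hd := hstep ⟨kv, hk⟩ hne
        rcases Nat.eq_zero_or_pos kv with h0 | h0
        · subst h0
          rw [prev_eq_zero rfl] at hd
          have hbk : 1 ≤ b ⟨0, hk⟩ := (hb.2 ⟨0, hk⟩).1
          omega
        · rw [prev_eq (show kv ≠ 0 by omega)] at hd
          have hd' : (c : Fin m → ℕ) ⟨kv, hk⟩ ≤ b ⟨kv, hk⟩ ∨
              (c : Fin m → ℕ) ⟨kv, hk⟩ ≤ (c : Fin m → ℕ) ⟨kv - 1, by omega⟩ + 1 := hd
          clear hd
          have hp' : (c : Fin m → ℕ) ⟨kv - 1, by omega⟩ < (c : Fin m → ℕ) ⟨kv, hk⟩ :=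
            hsm (by simp [Fin.lt_def]; omega)
          have hih : (c : Fin m → ℕ) ⟨kv - 1, by omega⟩ = ji b i v ⟨kv - 1, by omega⟩ :=
            ih (kv - 1) (by omega) (by omega)
          rw [ji_apply_lt (show ((⟨kv - 1, by omega⟩ : Fin m)).1 < i.1 by simp; omega)] at hih
          have hbm : b ⟨kv - 1, by omega⟩ < b ⟨kv, hk⟩ := hb.1 (by simp [Fin.lt_def]; omega)
          omega
      · -- equal to i
        have : (⟨kv, hk⟩ : Fin m) = i := Fin.ext hki
        rw [this, ji_apply_self hgood.1]
      · -- above i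
        rw [ji_apply_ge (show ¬ ((⟨kv, hk⟩ : Fin m)).1 < i.1 by simp; omega)]
        show (c : Fin m → ℕ) ⟨kv, hk⟩ = max (b ⟨kv, hk⟩) (v + (kv - i.1))
        have hne : (⟨kv, hk⟩ : Fin m) ≠ i := by
          intro hh; rw [Fin.ext_iff] at hh; simp at hh; omega
        have hd := hstep ⟨kv, hk⟩ hne
        have hkv0 : kv ≠ 0 := by omega
        rw [prev_eq hkv0] at hd
        have hd' : (c : Fin m → ℕ) ⟨kv, hk⟩ ≤ b ⟨kv, hk⟩ ∨
            (c : Fin m → ℕ) ⟨kv, hk⟩ ≤ (c : Fin m → ℕ) ⟨kv - 1, by omega⟩ + 1 := hd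
        clear hd
        have hp' : (c : Fin m → ℕ) ⟨kv - 1, by omega⟩ < (c : Fin m → ℕ) ⟨kv, hk⟩ :=
          hsm (by simp [Fin.lt_def]; omega)
        have hih : (c : Fin m → ℕ) ⟨kv - 1, by omega⟩ = ji b i v ⟨kv - 1, by omega⟩ :=
          ih (kv - 1) (by omega) (by omega)
        rcases lt_trichotomy (kv - 1) i.1 with h' | h' | h'
        · omega
        · -- kv - 1 = i.1 : c ⟨kv-1⟩ = v
          have hei : (⟨kv - 1, by omega⟩ : Fin m) = i := Fin.ext h'
          rw [hei] at hih hd' hp'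
          rw [ji_apply_self hgood.1] at hih
          rw [← hv] at hih hd' hp'
          have hbm : b i < b ⟨kv, hk⟩ := by
            rw [← hei]; exact hb.1 (by simp [Fin.lt_def]; omega)
          have hvbi : b i < v := hgood.1
          omega
        · rw [ji_apply_ge (show ¬ ((⟨kv - 1, by omega⟩ : Fin m)).1 < i.1 by simp; omega)] at hih
          have hih' : (c : Fin m → ℕ) ⟨kv - 1, by omega⟩ =
              max (b ⟨kv - 1, by omega⟩) (v + (kv - 1 - i.1)) := hih
          clear hih
          have hbm : b ⟨kv - 1, by omega⟩ < b ⟨kv, hk⟩ := hb.1 (by simp [Fin.lt_def]; omega)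
          omega
  funext k
  have := key k.1 k.2
  simpa using this

section jiprops

variable {b : Fin m → ℕ} {i : Fin m} {v : ℕ}

lemma ji_strictMono (hb : b ∈ Gamma n m) : StrictMono (ji b i v) := by
  intro k l hkl
  have hkl' : k.1 < l.1 := hkl
  have hbkl : b k < b l := hb.1 hkl
  unfold ji
  split_ifs with h1 h2 h2
  · exact hbkl
  · exact lt_of_lt_of_le hbkl (le_max_left _ _)
  · omega
  · exact max_lt_max hbkl (by omega)

lemma ji_mem (hb : b ∈ Gamma n m) (hn : v + (m - 1 - i.1) ≤ n) :
    ji b i v ∈ GammaF n m b := by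
  refine ⟨⟨ji_strictMono hb, ?_⟩, ?_⟩
  · intro k
    have hb1 := (hb.2 k).1
    have hb2 := (hb.2 k).2
    have hk : k.1 ≤ m - 1 := by have := k.2; omega
    unfold ji
    split_ifs with h
    · exact ⟨hb1, hb2⟩
    · constructor
      · omega
      · have : v + (k.1 - i.1) ≤ v + (m - 1 - i.1) := by omega
        omega
  · intro k
    unfold ji
    split_ifs with h
    · exact le_refl _
    · exact le_max_left _ _

lemma ji_good (hb : b ∈ Gamma n m) (hv : b i < v) :
    Good b (ji b i v) i := by
  have hji := ji_apply_self (b := b) hv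
  constructor
  · rw [hji]; exact hv
  · rw [hji]
    rcases Nat.eq_zero_or_pos i.1 with h0 | h0
    · rw [prev_eq_zero h0]
      have := (hb.2 i).1
      omega
    · rw [prev_eq (show i.1 ≠ 0 by omega)]
      rw [ji_apply_lt (show i.1 - 1 < i.1 by omega)]
      have : b ⟨i.1 - 1, by omega⟩ < b i := hb.1 (by simp [Fin.lt_def]; omega)
      omega

lemma ji_not_good (hb : b ∈ Gamma n m) (hv : b i < v) {k : Fin m} (hk : k ≠ i) :
    ¬ Good b (ji b i v) k := by
  intro hg
  have h1 := hg.1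
  have h2 := hg.2
  rcases lt_trichotomy k.1 i.1 with h | h | h
  · rw [ji_apply_lt h] at h1
    exact lt_irrefl _ h1
  · exact hk (Fin.ext h)
  · rw [ji_apply_ge (show ¬ k.1 < i.1 by omega)] at h1 h2
    have hk0 : k.1 ≠ 0 := by omega
    rw [prev_eq hk0] at h2
    rcases lt_trichotomy (k.1 - 1) i.1 with h' | h' | h'
    · -- k - 1 < i < k impossible
      omega
    · have hei : (⟨k.1 - 1, by omega⟩ : Fin m) = i := Fin.ext h'
      rw [hei, ji_apply_self hv] at h2
      omega
    · rw [ji_apply_ge (show ¬ ((⟨k.1 - 1, by omega⟩ : Fin m)).1 < i.1 by simp; omega)] at h2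
      have h2' : max (b ⟨k.1 - 1, by omega⟩) (v + (k.1 - 1 - i.1)) + 1 <
          max (b k) (v + (k.1 - i.1)) := h2
      clear h2
      omega

lemma ji_joinIrr (hb : b ∈ Gamma n m) (hv : b i < v) (hn : v + (m - 1 - i.1) ≤ n) :
    JoinIrr n m b ⟨ji b i v, ji_mem hb hn⟩ := by
  rw [joinIrr_iff_unique_good]
  refine ⟨i, ji_good hb hv, ?_⟩
  intro j hj
  by_contra hne
  exact ji_not_good hb hv hne hj

/-- order comparison of canonical join-irreducibles. -/
lemma ji_le_ji_iff {j : Fin m} {w : ℕ} (hb : b ∈ Gamma n m)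
    (hv : b i < v) (hw : b j < w) :
    ji b i v ≤ ji b j w ↔ j.1 ≤ i.1 ∧ v + j.1 ≤ w + i.1 := by
  constructor
  · intro h
    have hi : ji b i v i ≤ ji b j w i := h i
    rw [ji_apply_self hv] at hi
    have hji : j.1 ≤ i.1 := by
      by_contra hcon
      rw [ji_apply_lt (show i.1 < j.1 by omega)] at hi
      omega
    refine ⟨hji, ?_⟩
    rw [ji_apply_ge (show ¬ i.1 < j.1 by omega)] at hi
    omega
  · rintro ⟨h1, h2⟩
    intro k
    show ji b i v k ≤ ji b j w k
    unfold ji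
    split_ifs with ha hb' hb'
    · exact le_refl _
    · exact le_max_left _ _
    · omega
    · exact max_le_max (le_refl _) (by omega)

end jiprops

end Stmt5Aux

open Stmt5Aux in
theorem stmt5 (n m : ℕ) (hm : 1 ≤ m) (hmn : m ≤ n) (b : Fin m → ℕ)
    (hb : b ∈ Gamma n m) :
    (∀ c d : ↥(GammaF n m b), ∀ i j : Fin m,
      JoinIrr n m b c → JoinIrr n m b d →
      Good b (c : Fin m → ℕ) i → Good b (d : Fin m → ℕ) j →
      phi n m (c : Fin m → ℕ) i = phi n m (d : Fin m → ℕ) j → c = d) ∧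
    (∀ p q p' q' : ℕ, (p, q) ∈ PhiIm n m b → p' ≤ p → q' ≤ q →
      (p', q') ∈ PhiIm n m b) ∧
    (PhiIm n m b).Finite ∧
    Nonempty (↥(JP n m b) ≃o ↥(OrderDual.toDual '' PhiIm n m b)) := by
  classical
  -- injectivity
  have inj : ∀ c d : ↥(GammaF n m b), ∀ i j : Fin m,
      JoinIrr n m b c → JoinIrr n m b d →
      Good b (c : Fin m → ℕ) i → Good b (d : Fin m → ℕ) j →
      phi n m (c : Fin m → ℕ) i = phi n m (d : Fin m → ℕ) j → c = d := by
    intro c d i j hc hd hgc hgd heq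
    obtain ⟨i', hi', hci⟩ := (joinIrr_iff_unique_good c).mp hc
    obtain ⟨j', hj', hdj⟩ := (joinIrr_iff_unique_good d).mp hd
    have heq2 : i.1 = j.1 := congrArg Prod.snd heq
    have hij : i = j := Fin.ext heq2
    subst hij
    have heq1 : n - (c : Fin m → ℕ) i - (m - 1 - i.1) = n - (d : Fin m → ℕ) i - (m - 1 - i.1) :=
      congrArg Prod.fst heq
    have hb1 := tup_bound c.2.1 i
    have hb2 := tup_bound d.2.1 i
    have hval : (c : Fin m → ℕ) i = (d : Fin m → ℕ) i := by omega
    have hcji := eq_ji c hb hgc (fun k hk => (hci k hk).trans (hci i hgc).symm)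
    have hdji := eq_ji d hb hgd (fun k hk => (hdj k hk).trans (hdj i hgd).symm)
    apply Subtype.ext
    rw [hcji, hdji, hval]
  -- the filter property
  have filt : ∀ p q p' q' : ℕ, (p, q) ∈ PhiIm n m b → p' ≤ p → q' ≤ q →
      (p', q') ∈ PhiIm n m b := by
    rintro p q p' q' ⟨c, i, hJI, hGood, hphi⟩ hp hq
    have hqi : q = i.1 := (congrArg Prod.snd hphi).symm
    have hpv : p = n - (c : Fin m → ℕ) i - (m - 1 - i.1) := (congrArg Prod.fst hphi).symm
    set v := (c : Fin m → ℕ) i with hvdef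
    have hbiv : b i < v := hGood.1
    have hbound : v + (m - 1 - i.1) ≤ n := tup_bound c.2.1 i
    have hq'm : q' < m := by have := i.2; omega
    set i' : Fin m := ⟨q', hq'm⟩ with hi'def
    have hbmono : b i' + (i.1 - q') ≤ b i := by
      have := smono_le hb.1 i.1 i.2 i' (by simp [hi'def]; omega)
      simpa using this
    have hbi'1 : 1 ≤ b i' := (hb.2 i').1
    set v' : ℕ := n - p' - (m - 1 - q') with hv'def
    have hv'gt : b i' < v' := by omega
    have hv'n : v' + (m - 1 - q') ≤ n := by omega
    refine ⟨⟨ji b i' v', ji_mem hb hv'n⟩, i', ji_joinIrr hb hv'gt hv'n,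
      ji_good hb hv'gt, ?_⟩
    show (n - ji b i' v' i' - (m - 1 - q'), q') = (p', q')
    rw [ji_apply_self hv'gt]
    have hlast : n - v' - (m - 1 - q') = p' := by omega
    rw [hlast]
  refine ⟨inj, filt, ?_, ?_⟩
  · -- finiteness
    apply Set.Finite.subset ((Set.finite_Iic n).prod (Set.finite_Iic m))
    rintro ⟨p, q⟩ ⟨c, i, hJI, hGood, hphi⟩
    have hqi : q = i.1 := (congrArg Prod.snd hphi).symm
    have hpv : p = n - (c : Fin m → ℕ) i - (m - 1 - i.1) := (congrArg Prod.fst hphi).symm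
    constructor
    · simp only [Set.mem_Iic]; omega
    · simp only [Set.mem_Iic]; have := i.2; omega
  · -- the order isomorphism
    have hgex : ∀ x : ↥(JP n m b), ∃! i : Fin m, Good b ((x : ↥(GammaF n m b)) : Fin m → ℕ) i :=
      fun x => (joinIrr_iff_unique_good x.1).mp x.2
    let gi : ↥(JP n m b) → Fin m := fun x => (hgex x).choose
    have hgi_good : ∀ x : ↥(JP n m b), Good b ((x : ↥(GammaF n m b)) : Fin m → ℕ) (gi x) :=
      fun x => (hgex x).choose_spec.1
    have hgi_uniq : ∀ (x : ↥(JP n m b)) (j : Fin m),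
        Good b ((x : ↥(GammaF n m b)) : Fin m → ℕ) j → j = gi x :=
      fun x => (hgex x).choose_spec.2
    let f : ↥(JP n m b) → ↥(OrderDual.toDual '' PhiIm n m b) := fun x =>
      ⟨OrderDual.toDual (phi n m ((x : ↥(GammaF n m b)) : Fin m → ℕ) (gi x)),
        ⟨phi n m ((x : ↥(GammaF n m b)) : Fin m → ℕ) (gi x),
          ⟨x.1, gi x, x.2, hgi_good x, rfl⟩, rfl⟩⟩
    have hval : ∀ x : ↥(JP n m b),
        ((x : ↥(GammaF n m b)) : Fin m → ℕ) =
          ji b (gi x) (((x : ↥(GammaF n m b)) : Fin m → ℕ) (gi x)) :=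
      fun x => eq_ji x.1 hb (hgi_good x) (hgi_uniq x)
    have hbij : Function.Bijective f := by
      constructor
      · intro x y hxy
        have h1 : phi n m ((x : ↥(GammaF n m b)) : Fin m → ℕ) (gi x) =
            phi n m ((y : ↥(GammaF n m b)) : Fin m → ℕ) (gi y) := congrArg Subtype.val hxy
        have := inj x.1 y.1 (gi x) (gi y) x.2 y.2 (hgi_good x) (hgi_good y) h1
        exact Subtype.ext this
      · rintro ⟨z, ⟨pq, ⟨c, i, hJI, hGood, hphi⟩, hz⟩⟩
        refine ⟨(⟨c, hJI⟩ : ↥(JP n m b)), ?_⟩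
        apply Subtype.ext
        have hgi_eq : i = gi ⟨c, hJI⟩ := hgi_uniq ⟨c, hJI⟩ i hGood
        simp only [f]
        rw [← hz, ← hphi, ← hgi_eq]
    refine ⟨⟨Equiv.ofBijective f hbij, ?_⟩⟩
    intro x y
    show f x ≤ f y ↔ x ≤ y
    -- unfold orders
    have hxle : (x ≤ y) ↔ ((x : ↥(GammaF n m b)) : Fin m → ℕ) ≤ ((y : ↥(GammaF n m b)) : Fin m → ℕ) :=
      Iff.rfl
    have hfle : (f x ≤ f y) ↔
        phi n m ((y : ↥(GammaF n m b)) : Fin m → ℕ) (gi y) ≤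
          phi n m ((x : ↥(GammaF n m b)) : Fin m → ℕ) (gi x) := Iff.rfl
    rw [hxle, hfle]
    have hvb : b (gi x) < ((x : ↥(GammaF n m b)) : Fin m → ℕ) (gi x) := (hgi_good x).1
    have hwb : b (gi y) < ((y : ↥(GammaF n m b)) : Fin m → ℕ) (gi y) := (hgi_good y).1
    have hvn : ((x : ↥(GammaF n m b)) : Fin m → ℕ) (gi x) + (m - 1 - (gi x).1) ≤ n :=
      tup_bound x.1.2.1 (gi x)
    have hwn : ((y : ↥(GammaF n m b)) : Fin m → ℕ) (gi y) + (m - 1 - (gi y).1) ≤ n :=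
      tup_bound y.1.2.1 (gi y)
    rw [hval x, hval y]
    rw [ji_le_ji_iff hb hvb hwb]
    unfold phi
    rw [ji_apply_self hvb, ji_apply_self hwb]
    rw [Prod.mk_le_mk]
    have hi2 : (gi x).1 < m := (gi x).2
    have hj2 : (gi y).1 < m := (gi y).2
    constructor
    · rintro ⟨h1, h2⟩
      constructor <;> omega
    · rintro ⟨h1, h2⟩
      constructor <;> omega
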